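/- Let L₁ and L₂ be lists over a linearly ordered type, each sorted in descending order, with |L₁| ≥ 1 and |L₂| ≥ 1. Define the shuffle operation that replaces, for each index i < min(|L₁|,|L₂|), the pair (L₁[i], L₂[i]) by (max(L₁[i],L₂[i]), min(L₁[i],L₂[i])). Then after shuffling, the head of L₁ is the maximum element of L₁ ++ L₂. -/

import Mathlib

variable {α : Type*} [LinearOrder α]

/-- The first list after the elementwise compare-and-swap shuffle: position `i` holds
`max (L₁[i]) (L₂[i])` for `i < min |L₁| |L₂|`, remaining positions of `L₁` unchanged. -/
def shuffleFst (L₁ L₂ : List α) : List α :=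
  List.zipWith max L₁ L₂ ++ L₁.drop L₂.length

/-- The second list after the shuffle: position `i` holds `min (L₁[i]) (L₂[i])`. -/
def shuffleSnd (L₁ L₂ : List α) : List α :=
  List.zipWith min L₁ L₂ ++ L₂.drop L₁.length

/-- After shuffling two nonempty descending-sorted lists, the head of the first list is
the maximum element of `L₁ ++ L₂`. -/
theorem shuffle_head_is_max (L₁ L₂ : List α)
    (h₁ : L₁ ≠ []) (h₂ : L₂ ≠ [])
    (hs₁ : L₁.Pairwise (· ≥ ·)) (hs₂ : L₂.Pairwise (· ≥ ·))
    (hne : shuffleFst L₁ L₂ ≠ []) :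
    (shuffleFst L₁ L₂).head hne ∈ L₁ ++ L₂ ∧
      ∀ x ∈ L₁ ++ L₂, x ≤ (shuffleFst L₁ L₂).head hne := by
  obtain ⟨a, t₁, rfl⟩ := List.exists_cons_of_ne_nil h₁
  obtain ⟨b, t₂, rfl⟩ := List.exists_cons_of_ne_nil h₂
  have hhead : (shuffleFst (a :: t₁) (b :: t₂)).head hne = max a b := by
    simp [shuffleFst]
  rw [hhead]
  have ha : ∀ x ∈ a :: t₁, x ≤ a := by
    intro x hx
    rcases List.mem_cons.mp hx with rfl | hx
    · exact le_refl _
    · exact (List.pairwise_cons.mp hs₁).1 x hx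
  have hb : ∀ x ∈ b :: t₂, x ≤ b := by
    intro x hx
    rcases List.mem_cons.mp hx with rfl | hx
    · exact le_refl _
    · exact (List.pairwise_cons.mp hs₂).1 x hx
  constructor
  · rcases max_choice a b with h | h <;> rw [h] <;> simp
  · intro x hx
    rcases List.mem_append.mp hx with hx | hx
    · exact le_trans (ha x hx) (le_max_left a b)
    · exact le_trans (hb x hx) (le_max_right a b)
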